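/- Let Rad be a root system in a finite-dimensional real inner product space V, let t be an involution of Rad, let v be an S-chamber vector for t, let B = B(v), and let B_• = {β ∈ B : t(β) = −β}. Let α ∈ B with t(α) ≠ ±α. Then there exists a unique α' ∈ B such that t(α) − α' lies in the ℤ-span of B_•. Moreover α'' := t(α) − α' lies in the ℤ_{≥0}-span of B_•, α + α'' ∈ Rad, and among all γ in the ℤ_{≥0}-span of B_• with α + γ ∈ Rad, the element α'' is the unique one of maximal coefficient sum (the sum of the coordinates of γ with respect to B_•). -/

import Mathlib

open scoped RealInnerProductSpace

namespace PaperRS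

variable {V : Type*} [NormedAddCommGroup V] [InnerProductSpace ℝ V]

/-- The reflection in a root `α`. -/
noncomputable def reflRoot (α x : V) : V := x - (2 * ⟪x, α⟫ / ⟪α, α⟫) • α

/-- `Rad` is a (reduced, crystallographic) root system in `V`. -/
structure IsRootSystem (Rad : Set V) : Prop where
  finite : Rad.Finite
  nonzero : ∀ α ∈ Rad, α ≠ 0
  spanning : Submodule.span ℝ Rad = ⊤
  integral : ∀ α ∈ Rad, ∀ β ∈ Rad, ∃ n : ℤ, 2 * ⟪β, α⟫ / ⟪α, α⟫ = (n : ℝ)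
  reflMem : ∀ α ∈ Rad, ∀ β ∈ Rad, reflRoot α β ∈ Rad
  reduced : ∀ α ∈ Rad, ∀ c : ℝ, c • α ∈ Rad → c = 1 ∨ c = -1

/-- Irreducibility: `Rad` is not the union of two nonempty mutually orthogonal subsets. -/
def IsIrreducible (Rad : Set V) : Prop :=
  ¬ ∃ R₁ R₂ : Set V, R₁.Nonempty ∧ R₂.Nonempty ∧ Rad = R₁ ∪ R₂ ∧
      ∀ α ∈ R₁, ∀ β ∈ R₂, ⟪α, β⟫ = 0

/-- An involution of the root system `Rad`: an orthogonal linear automorphism `t` of `V`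
with `t(Rad) = Rad` and `t ∘ t = id`. -/
structure IsInvolution (Rad : Set V) (t : V ≃ₗᵢ[ℝ] V) : Prop where
  maps : (⇑t) '' Rad = Rad
  invol : ∀ x : V, t (t x) = x

/-- Two roots are strongly orthogonal if neither their sum nor their difference is a root. -/
def StronglyOrthogonal (Rad : Set V) (α β : V) : Prop :=
  α ≠ β ∧ α ≠ -β ∧ α + β ∉ Rad ∧ α - β ∉ Rad

/-- A vector is regular for `Rad` if it is orthogonal to no root. -/
def IsRegular (Rad : Set V) (v : V) : Prop := ∀ α ∈ Rad, ⟪α, v⟫ ≠ 0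

/-- The positive roots determined by a regular vector `v`. -/
def posRoots (Rad : Set V) (v : V) : Set V := {α ∈ Rad | 0 < ⟪α, v⟫}

/-- The base of simple roots determined by a regular vector `v`: the positive roots which
are not sums of two positive roots. -/
def simpleBase (Rad : Set V) (v : V) : Set V :=
  {α ∈ posRoots Rad v | ¬ ∃ β ∈ posRoots Rad v, ∃ γ ∈ posRoots Rad v, α = β + γ}

/-- A regular vector `v` is an S-chamber vector for an involution `t` if
`(α,v)·(t α,v) > 0` for every complex root `α` (i.e. every root with `t α ≠ ±α`). -/
def IsSChamber (Rad : Set V) (t : V ≃ₗᵢ[ℝ] V) (v : V) : Prop :=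
  IsRegular Rad v ∧
    ∀ α ∈ Rad, t α ≠ α → t α ≠ -α → 0 < ⟪α, v⟫ * ⟪t α, v⟫

/-- `P ⊆ Rad` is parabolic if `P ∪ (-P) = Rad` and `P` is closed under root addition. -/
def IsParabolic (Rad P : Set V) : Prop :=
  P ⊆ Rad ∧ (∀ α ∈ Rad, α ∈ P ∨ -α ∈ P) ∧
    ∀ α ∈ P, ∀ β ∈ P, α + β ∈ Rad → α + β ∈ P

/-- Composition `s_{β 0} ∘ s_{β 1} ∘ ⋯ ∘ s_{β (r-1)}` of the reflections in the roots
`β 0, …, β (r-1)`. -/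
noncomputable def reflComp : (r : ℕ) → (Fin r → V) → V → V
  | 0, _ => id
  | r + 1, β => reflRoot (β 0) ∘ reflComp r (fun i => β i.succ)

variable {Rad : Set V} {v : V}

lemma IsRootSystem.inner_self_pos' (hRS : IsRootSystem Rad) {α : V} (hα : α ∈ Rad) :
    0 < ⟪α, α⟫ := by
  have h : 0 < ‖α‖ := norm_pos_iff.mpr (hRS.nonzero α hα)
  rw [real_inner_self_eq_norm_sq]
  positivity

lemma IsRootSystem.neg_mem (hRS : IsRootSystem Rad) {α : V} (hα : α ∈ Rad) : -α ∈ Rad := by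
  have h := hRS.reflMem α hα α hα
  have hne : ⟪α, α⟫ ≠ 0 := (hRS.inner_self_pos' hα).ne'
  unfold reflRoot at h
  have h2 : (2 * ⟪α, α⟫ / ⟪α, α⟫ : ℝ) = 2 := by field_simp
  rw [h2] at h
  have h3 : α - (2:ℝ) • α = -α := by
    rw [two_smul]; abel
  rwa [h3] at h

lemma IsRootSystem.sub_mem' (hRS : IsRootSystem Rad) {α β : V} (hα : α ∈ Rad) (hβ : β ∈ Rad)
    (hne : α ≠ β) (hip : 0 < ⟪α, β⟫) : α - β ∈ Rad := by
  obtain ⟨m, hm⟩ := hRS.integral β hβ α hα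
  obtain ⟨n, hn⟩ := hRS.integral α hα β hβ
  have hββ := hRS.inner_self_pos' hβ
  have hαα := hRS.inner_self_pos' hα
  have hip' : 0 < ⟪β, α⟫ := by rwa [real_inner_comm]
  have hmpos : (0:ℝ) < (m:ℝ) := by rw [← hm]; positivity
  have hnpos : (0:ℝ) < (n:ℝ) := by rw [← hn]; positivity
  have e1 : 2 * ⟪α, β⟫ = (m:ℝ) * ⟪β, β⟫ := (div_eq_iff hββ.ne').mp hm
  have e2 : 2 * ⟪β, α⟫ = (n:ℝ) * ⟪α, α⟫ := (div_eq_iff hαα.ne').mp hn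
  by_cases hm1 : (m:ℝ) = 1
  · have h := hRS.reflMem β hβ α hα
    unfold reflRoot at h
    rwa [hm, hm1, one_smul] at h
  by_cases hn1 : (n:ℝ) = 1
  · have h := hRS.reflMem α hα β hβ
    unfold reflRoot at h
    rw [hn, hn1, one_smul] at h
    have h' := hRS.neg_mem h
    rwa [neg_sub] at h'
  · exfalso
    have hm2 : (2:ℝ) ≤ (m:ℝ) := by
      have h1 : (0:ℤ) < m := by exact_mod_cast hmpos
      have h2 : m ≠ 1 := by exact_mod_cast hm1
      exact_mod_cast (by omega : (2:ℤ) ≤ m)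
    have hn2 : (2:ℝ) ≤ (n:ℝ) := by
      have h1 : (0:ℤ) < n := by exact_mod_cast hnpos
      have h2 : n ≠ 1 := by exact_mod_cast hn1
      exact_mod_cast (by omega : (2:ℤ) ≤ n)
    have hsub : ⟪α - β, α - β⟫ ≤ 0 := by
      have expand : ⟪α - β, α - β⟫ = ⟪α, α⟫ - ⟪α, β⟫ - ⟪β, α⟫ + ⟪β, β⟫ :=
        inner_sub_sub_self α β
      have hcomm : ⟪β, α⟫ = ⟪α, β⟫ := real_inner_comm α β
      nlinarith [e1, e2, hm2, hn2, hββ, hαα, expand, hcomm]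
    have : α - β = 0 := real_inner_self_nonpos.mp hsub
    exact hne (sub_eq_zero.mp this)

lemma IsRootSystem.pos_or_neg (hRS : IsRootSystem Rad) (hreg : IsRegular Rad v) {γ : V}
    (hγ : γ ∈ Rad) : γ ∈ posRoots Rad v ∨ -γ ∈ posRoots Rad v := by
  rcases lt_or_gt_of_ne (hreg γ hγ) with h | h
  · right; exact ⟨hRS.neg_mem hγ, by rw [inner_neg_left]; linarith⟩
  · left; exact ⟨hγ, h⟩

lemma sub_not_mem_of_simple (hRS : IsRootSystem Rad) (hreg : IsRegular Rad v) {α β : V}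
    (hα : α ∈ simpleBase Rad v) (hβ : β ∈ simpleBase Rad v) : α - β ∉ Rad := by
  intro hmem
  rcases hRS.pos_or_neg hreg hmem with h | h
  · exact hα.2 ⟨β, hβ.1, α - β, h, by abel⟩
  · exact hβ.2 ⟨α, hα.1, β - α, by rwa [neg_sub] at h, by abel⟩

lemma inner_nonpos_of_simple (hRS : IsRootSystem Rad) (hreg : IsRegular Rad v) {α β : V}
    (hα : α ∈ simpleBase Rad v) (hβ : β ∈ simpleBase Rad v) (hne : α ≠ β) : ⟪α, β⟫ ≤ 0 := by
  by_contra h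
  push_neg at h
  exact sub_not_mem_of_simple hRS hreg hα hβ (hRS.sub_mem' hα.1.1 hβ.1.1 hne h)

lemma posRoots_subset_closure (hRS : IsRootSystem Rad) :
    posRoots Rad v ⊆ AddSubmonoid.closure (simpleBase Rad v) := by
  classical
  set F := hRS.finite.toFinset with hF
  suffices H : ∀ n : ℕ, ∀ γ ∈ posRoots Rad v,
      (F.filter fun δ => 0 < ⟪δ, v⟫ ∧ ⟪δ, v⟫ < ⟪γ, v⟫).card < n →
      γ ∈ AddSubmonoid.closure (simpleBase Rad v) by
    intro γ hγ; exact H _ γ hγ (Nat.lt_succ_self _)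
  intro n
  induction n with
  | zero => intro γ _ h; omega
  | succ n ih =>
    intro γ hγ hcard
    by_cases hB : γ ∈ simpleBase Rad v
    · exact AddSubmonoid.subset_closure hB
    · have hex : ∃ β ∈ posRoots Rad v, ∃ δ ∈ posRoots Rad v, γ = β + δ := by
        by_contra hc; exact hB ⟨hγ, hc⟩
      obtain ⟨β, hβ, δ, hδ, hsum⟩ := hex
      have hlt : ∀ x ∈ posRoots Rad v, ∀ y ∈ posRoots Rad v, γ = x + y →
          (F.filter fun d => 0 < ⟪d, v⟫ ∧ ⟪d, v⟫ < ⟪x, v⟫).card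
            < (F.filter fun d => 0 < ⟪d, v⟫ ∧ ⟪d, v⟫ < ⟪γ, v⟫).card := by
        intro x hx y hy hxy
        have hxv : ⟪x, v⟫ < ⟪γ, v⟫ := by
          rw [hxy, inner_add_left]; linarith [hy.2]
        apply Finset.card_lt_card
        have hsubs : (F.filter fun d => 0 < ⟪d, v⟫ ∧ ⟪d, v⟫ < ⟪x, v⟫) ⊆
            (F.filter fun d => 0 < ⟪d, v⟫ ∧ ⟪d, v⟫ < ⟪γ, v⟫) := by
          intro d hd
          simp only [Finset.mem_filter] at hd ⊢
          exact ⟨hd.1, hd.2.1, lt_trans hd.2.2 hxv⟩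
        rw [Finset.ssubset_iff_of_subset hsubs]
        refine ⟨x, ?_, ?_⟩
        · simp only [Finset.mem_filter]
          exact ⟨(Set.Finite.mem_toFinset _).mpr hx.1, hx.2, hxv⟩
        · simp only [Finset.mem_filter]
          intro hc
          exact lt_irrefl _ hc.2.2
      have h1 := ih β hβ (by have := hlt β hβ δ hδ hsum; omega)
      have h2 := ih δ hδ (by have := hlt δ hδ β hβ (by rw [hsum]; abel); omega)
      rw [hsum]; exact AddSubmonoid.add_mem _ h1 h2

lemma simpleBase_linearIndependent (hRS : IsRootSystem Rad) (hreg : IsRegular Rad v) :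
    LinearIndependent ℝ ((↑) : simpleBase Rad v → V) := by
  classical
  rw [linearIndependent_iff']
  intro s g hsum i hi
  set P := s.filter fun j => 0 < g j with hP
  set N := s.filter fun j => g j < 0 with hN
  have hinner_v : ∀ j : simpleBase Rad v, 0 < ⟪(j:V), v⟫ := fun j => j.2.1.2
  have hNsub : N ⊆ s.filter fun j => ¬ 0 < g j := by
    intro j hj
    simp only [hN, Finset.mem_filter] at hj
    simp only [Finset.mem_filter]
    exact ⟨hj.1, by linarith [hj.2]⟩
  have hsplit : (∑ j ∈ P, g j • (j:V)) + (∑ j ∈ N, g j • (j:V)) = 0 := by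
    have h1 := Finset.sum_filter_add_sum_filter_not s (fun j => 0 < g j)
        (fun j => g j • (j:V))
    have h2 : ∑ j ∈ N, g j • (j:V)
        = ∑ j ∈ s.filter (fun j => ¬ 0 < g j), g j • (j:V) := by
      refine Finset.sum_subset hNsub ?_
      intro j hj hjn
      simp only [Finset.mem_filter, not_lt] at hj
      simp only [hN, Finset.mem_filter, not_and, not_lt] at hjn
      have hg0 : g j = 0 := le_antisymm hj.2 (hjn hj.1)
      rw [hg0, zero_smul]
    rw [h2, h1, hsum]
  set lam := ∑ j ∈ P, g j • (j:V) with hlamdef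
  have hlamneg : lam = ∑ j ∈ N, (-g j) • (j:V) := by
    have h3 : lam = -∑ j ∈ N, g j • (j:V) := eq_neg_of_add_eq_zero_left hsplit
    rw [h3, ← Finset.sum_neg_distrib]
    exact Finset.sum_congr rfl fun j _ => (neg_smul _ _).symm
  have hij_nonpos : ∀ i' ∈ P, ∀ j' ∈ N, ⟪(i':V), (j':V)⟫ ≤ 0 := by
    intro i' hi' j' hj'
    simp only [hP, Finset.mem_filter] at hi'
    simp only [hN, Finset.mem_filter] at hj'
    have hne : (i':V) ≠ (j':V) := by
      intro h
      have : i' = j' := Subtype.coe_injective h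
      rw [this] at hi'
      linarith [hi'.2, hj'.2]
    exact inner_nonpos_of_simple hRS hreg i'.2 j'.2 hne
  have hlam_nonpos : ⟪lam, lam⟫ ≤ 0 := by
    have step1 : ⟪lam, lam⟫ = ∑ j ∈ N, (-g j) * ⟪lam, (j:V)⟫ := by
      nth_rewrite 2 [hlamneg]
      rw [inner_sum]
      exact Finset.sum_congr rfl fun j _ => real_inner_smul_right _ _ _
    rw [step1]
    refine Finset.sum_nonpos fun j hj => ?_
    have hgj : g j < 0 := by
      simp only [hN, Finset.mem_filter] at hj; exact hj.2
    have hinner_nonpos : ⟪lam, (j:V)⟫ ≤ 0 := by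
      rw [hlamdef, sum_inner]
      refine Finset.sum_nonpos fun i' hi' => ?_
      rw [real_inner_smul_left]
      have hgi : 0 < g i' := by
        simp only [hP, Finset.mem_filter] at hi'; exact hi'.2
      exact mul_nonpos_of_nonneg_of_nonpos hgi.le (hij_nonpos i' hi' j hj)
    exact mul_nonpos_of_nonneg_of_nonpos (by linarith) hinner_nonpos
  have hlam0 : lam = 0 := real_inner_self_nonpos.mp hlam_nonpos
  have hPempty : P = ∅ := by
    by_contra hne
    have hnonempty : P.Nonempty := Finset.nonempty_iff_ne_empty.mpr hne
    have hsum0 : ∑ j ∈ P, g j * ⟪(j:V), v⟫ = 0 := by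
      have h4 : ⟪lam, v⟫ = 0 := by rw [hlam0, inner_zero_left]
      rw [hlamdef, sum_inner] at h4
      simpa only [real_inner_smul_left] using h4
    have hpos : 0 < ∑ j ∈ P, g j * ⟪(j:V), v⟫ := by
      refine Finset.sum_pos (fun j hj => ?_) hnonempty
      have hgj : 0 < g j := by
        simp only [hP, Finset.mem_filter] at hj; exact hj.2
      exact mul_pos hgj (hinner_v j)
    linarith
  have hNempty : N = ∅ := by
    by_contra hne
    have hnonempty : N.Nonempty := Finset.nonempty_iff_ne_empty.mpr hne
    have hNsum : ∑ j ∈ N, g j • (j:V) = 0 := by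
      have := hsplit
      rw [hlam0, zero_add] at this
      exact this
    have hsum0 : ∑ j ∈ N, g j * ⟪(j:V), v⟫ = 0 := by
      have h4 : ⟪∑ j ∈ N, g j • (j:V), v⟫ = (0:ℝ) := by rw [hNsum, inner_zero_left]
      rw [sum_inner] at h4
      simpa only [real_inner_smul_left] using h4
    have hneg : 0 < ∑ j ∈ N, -(g j * ⟪(j:V), v⟫) := by
      refine Finset.sum_pos (fun j hj => ?_) hnonempty
      have hgj : g j < 0 := by
        simp only [hN, Finset.mem_filter] at hj; exact hj.2
      have := mul_pos (neg_pos.mpr hgj) (hinner_v j)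
      linarith
    rw [Finset.sum_neg_distrib, hsum0] at hneg
    simp at hneg
  have hiP : i ∉ P := by rw [hPempty]; exact Finset.notMem_empty i
  have hiN : i ∉ N := by rw [hNempty]; exact Finset.notMem_empty i
  simp only [hP, Finset.mem_filter, not_and, not_lt] at hiP
  simp only [hN, Finset.mem_filter, not_and, not_lt] at hiN
  exact le_antisymm (hiP hi) (hiN hi)

lemma simpleBase_span (hRS : IsRootSystem Rad) (hreg : IsRegular Rad v) :
    Submodule.span ℝ (simpleBase Rad v) = ⊤ := by
  refine eq_top_iff.mpr ?_
  rw [← hRS.spanning]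
  refine Submodule.span_le.mpr fun γ hγ => ?_
  have key : ∀ δ ∈ posRoots Rad v, δ ∈ Submodule.span ℝ (simpleBase Rad v) := by
    intro δ hδ
    have h1 := posRoots_subset_closure hRS hδ
    have h2 : AddSubmonoid.closure (simpleBase Rad v) ≤
        (Submodule.span ℝ (simpleBase Rad v)).toAddSubmonoid :=
      AddSubmonoid.closure_le.mpr Submodule.subset_span
    exact h2 h1
  rcases hRS.pos_or_neg hreg hγ with h | h
  · exact key γ h
  · have h5 := key _ h
    rwa [Submodule.neg_mem_iff] at h5

/-- for a complex simple root `α` in an S-chamber for `t`, `t α` differs from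
a unique simple root `α'` by an element `α'' = t α - α'` of the ℤ-span of the imaginary
simple roots; moreover `α''` lies in the ℕ-span, `α + α''` is a root, and `α''` is the
unique element of maximal coefficient sum among those `γ` in the ℕ-span of the imaginary
simple roots with `α + γ` a root. -/
theorem stmt9 {V : Type*} [NormedAddCommGroup V] [InnerProductSpace ℝ V]
    [FiniteDimensional ℝ V] (Rad : Set V) (hRS : IsRootSystem Rad)
    (t : V ≃ₗᵢ[ℝ] V) (ht : IsInvolution Rad t) (v : V) (hv : IsSChamber Rad t v)
    (α : V) (hα : α ∈ simpleBase Rad v) (h1 : t α ≠ α) (h2 : t α ≠ -α) :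
    ∃ α' ∈ simpleBase Rad v,
      t α - α' ∈ AddSubgroup.closure {β | β ∈ simpleBase Rad v ∧ t β = -β} ∧
      (∀ α₂ ∈ simpleBase Rad v,
        t α - α₂ ∈ AddSubgroup.closure {β | β ∈ simpleBase Rad v ∧ t β = -β} → α₂ = α') ∧
      t α - α' ∈ AddSubmonoid.closure {β | β ∈ simpleBase Rad v ∧ t β = -β} ∧
      α + (t α - α') ∈ Rad ∧
      ∀ γ ∈ AddSubmonoid.closure {β | β ∈ simpleBase Rad v ∧ t β = -β},
        α + γ ∈ Rad → γ ≠ t α - α' →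
          ∀ c c'' : V →₀ ℕ,
            (c.support : Set V) ⊆ {β | β ∈ simpleBase Rad v ∧ t β = -β} →
            (c''.support : Set V) ⊆ {β | β ∈ simpleBase Rad v ∧ t β = -β} →
            (c.sum fun b n => n • b) = γ → (c''.sum fun b n => n • b) = t α - α' →
            (c.sum fun _ n => n) < (c''.sum fun _ n => n) := by
  classical
  obtain ⟨hreg, hS⟩ := hv
  set B := simpleBase Rad v with hBdef
  set Bs : Set V := {β | β ∈ simpleBase Rad v ∧ t β = -β} with hBsdef
  have hBposinner : ∀ β ∈ B, 0 < ⟪β, v⟫ := fun β hβ => hβ.1.2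
  have hBrad : ∀ β ∈ B, β ∈ Rad := fun β hβ => hβ.1.1
  have tmem : ∀ x ∈ Rad, t x ∈ Rad := by
    intro x hx
    have h := Set.mem_image_of_mem (⇑t) hx
    rwa [ht.maps] at h
  have hBfin : B.Finite := hRS.finite.subset (fun β hβ => hβ.1.1)
  haveI : Fintype ↥B := hBfin.fintype
  have hli : LinearIndependent ℝ ((↑) : B → V) := simpleBase_linearIndependent hRS hreg
  have hspan : Submodule.span ℝ B = ⊤ := simpleBase_span hRS hreg
  let b : Module.Basis ↥B ℝ V := Module.Basis.mk hli
    (by rw [Subtype.range_coe]; exact hspan.ge)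
  have hb : ∀ j : ↥B, b j = ↑j := fun j => Module.Basis.mk_apply hli _ j
  have hr_basis : ∀ j i : ↥B, b.repr (↑j) i = if j = i then 1 else 0 := by
    intro j i
    rw [← hb j, b.repr_self, Finsupp.single_apply]
  -- nat coordinates for closure members
  have hnat : ∀ x ∈ AddSubmonoid.closure B, ∀ i : ↥B, ∃ n : ℕ, b.repr x i = (n : ℝ) := by
    intro x hx
    induction hx using AddSubmonoid.closure_induction with
    | mem β hβ =>
      intro i
      have hβ' : β = ((⟨β, hβ⟩ : ↥B) : V) := rfl
      rw [hβ', hr_basis]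
      refine ⟨if (⟨β, hβ⟩ : ↥B) = i then 1 else 0, ?_⟩
      split <;> simp
    | zero => intro i; exact ⟨0, by simp⟩
    | add x y hx hy ihx ihy =>
      intro i
      obtain ⟨nx, hnx⟩ := ihx i
      obtain ⟨ny, hny⟩ := ihy i
      exact ⟨nx + ny, by rw [map_add, Finsupp.add_apply, hnx, hny]; push_cast; ring⟩
  have hBsB : Bs ⊆ B := fun β hβ => hβ.1
  have hBsnat : ∀ x ∈ AddSubmonoid.closure Bs,
      (∀ i : ↥B, ∃ n : ℕ, b.repr x i = (n : ℝ)) ∧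
      (∀ i : ↥B, (↑i : V) ∉ Bs → b.repr x i = 0) := by
    intro x hx
    induction hx using AddSubmonoid.closure_induction with
    | mem β hβ =>
      constructor
      · intro i
        have hβ' : β = ((⟨β, hBsB hβ⟩ : ↥B) : V) := rfl
        rw [hβ', hr_basis]
        refine ⟨if (⟨β, hBsB hβ⟩ : ↥B) = i then 1 else 0, ?_⟩
        split <;> simp
      · intro i hiBs
        have hβ' : β = ((⟨β, hBsB hβ⟩ : ↥B) : V) := rfl
        rw [hβ', hr_basis]
        have hne : (⟨β, hBsB hβ⟩ : ↥B) ≠ i := by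
          intro hc
          apply hiBs
          rw [← hc]
          exact hβ
        simp [hne]
    | zero => exact ⟨fun i => ⟨0, by simp⟩, fun i _ => by simp⟩
    | add x y hx hy ihx ihy =>
      constructor
      · intro i
        obtain ⟨nx, hnx⟩ := ihx.1 i
        obtain ⟨ny, hny⟩ := ihy.1 i
        exact ⟨nx + ny, by rw [map_add, Finsupp.add_apply, hnx, hny]; push_cast; ring⟩
      · intro i hi
        rw [map_add, Finsupp.add_apply, ihx.2 i hi, ihy.2 i hi, add_zero]
  have hgrp0 : ∀ x ∈ AddSubgroup.closure Bs,
      ∀ i : ↥B, (↑i : V) ∉ Bs → b.repr x i = 0 := by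
    intro x hx
    induction hx using AddSubgroup.closure_induction with
    | mem β hβ =>
      intro i hiBs
      have hβ' : β = ((⟨β, hBsB hβ⟩ : ↥B) : V) := rfl
      rw [hβ', hr_basis]
      have hne : (⟨β, hBsB hβ⟩ : ↥B) ≠ i := by
        intro hc; apply hiBs; rw [← hc]; exact hβ
      simp [hne]
    | zero => intro i _; simp
    | add x y hx hy ihx ihy =>
      intro i hi
      rw [map_add, Finsupp.add_apply, ihx i hi, ihy i hi, add_zero]
    | neg x hx ihx =>
      intro i hi
      rw [map_neg, Finsupp.neg_apply, ihx i hi, neg_zero]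
  have hspanBs_t : ∀ x ∈ Submodule.span ℝ Bs, t x = -x := by
    intro x hx
    induction hx using Submodule.span_induction with
    | mem β hβ => exact hβ.2
    | zero => simp
    | add x y hx hy ihx ihy => rw [map_add, ihx, ihy]; abel
    | smul a x hx ihx => rw [map_smul, ihx, smul_neg]
  have hclosure_span : ∀ x ∈ AddSubmonoid.closure Bs, x ∈ Submodule.span ℝ Bs :=
    fun x hx => AddSubmonoid.closure_le.mpr
      (Submodule.subset_span : Bs ⊆ (Submodule.span ℝ Bs).toAddSubmonoid) hx
  have hspan_of_coords : ∀ x : V, (∀ i : ↥B, (↑i : V) ∉ Bs → b.repr x i = 0) →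
      x ∈ Submodule.span ℝ Bs := by
    intro x h0
    rw [← b.sum_repr x]
    refine Submodule.sum_mem _ fun i _ => ?_
    by_cases hc : (↑i : V) ∈ Bs
    · exact Submodule.smul_mem _ _ (Submodule.subset_span (by rw [hb]; exact hc))
    · rw [h0 i hc, zero_smul]; exact Submodule.zero_mem _
  have hmem_of_coords : ∀ x : V, (∀ i : ↥B, (↑i : V) ∉ Bs → b.repr x i = 0) →
      (∀ i : ↥B, ∃ n : ℕ, b.repr x i = (n : ℝ)) →
      x ∈ AddSubmonoid.closure Bs := by
    intro x h0 hn
    rw [← b.sum_repr x]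
    refine AddSubmonoid.sum_mem _ fun i _ => ?_
    by_cases hc : (↑i : V) ∈ Bs
    · obtain ⟨n, hn'⟩ := hn i
      rw [hn', hb, Nat.cast_smul_eq_nsmul]
      exact AddSubmonoid.nsmul_mem _ (AddSubmonoid.subset_closure hc) n
    · rw [h0 i hc, zero_smul]; exact zero_mem _
  have hzero_of_coords : ∀ x : V, (∀ i : ↥B, b.repr x i = 0) → x = 0 := by
    intro x h0
    rw [← b.sum_repr x]
    refine Finset.sum_eq_zero fun i _ => by rw [h0 i, zero_smul]
  -- S-chamber positivity
  have htpos : ∀ β ∈ Rad, 0 < ⟪β, v⟫ → t β ≠ -β → t β ∈ posRoots Rad v := by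
    intro β hβ hβv hne
    refine ⟨tmem β hβ, ?_⟩
    by_cases heq : t β = β
    · rw [heq]; exact hβv
    · have hprod := hS β hβ heq hne
      by_contra hc
      push_neg at hc
      nlinarith
  have hαRad : α ∈ Rad := hα.1.1
  have htαpos : t α ∈ posRoots Rad v := htpos α hαRad hα.1.2 h2
  have hαnotBs : α ∉ Bs := fun hc => h2 hc.2
  set iα : ↥B := ⟨α, hα⟩ with hiα
  set Sidx : Finset ↥B := Finset.univ.filter (fun i => (↑i : V) ∉ Bs) with hSidx
  have hmemSidx : ∀ i : ↥B, i ∈ Sidx ↔ (↑i : V) ∉ Bs := by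
    intro i; simp [hSidx]
  -- the linear functionals
  set F : V →ₗ[ℝ] ℝ := ∑ i ∈ Sidx, b.coord i with hFdef
  set G : V →ₗ[ℝ] ℝ := ∑ i ∈ Finset.univ, b.coord i with hGdef
  have hF : ∀ x, F x = ∑ i ∈ Sidx, b.repr x i := by
    intro x
    rw [hFdef, LinearMap.coe_sum, Finset.sum_apply]
    exact Finset.sum_congr rfl fun i _ => rfl
  have hG : ∀ x, G x = ∑ i ∈ Finset.univ, b.repr x i := by
    intro x
    rw [hGdef, LinearMap.coe_sum, Finset.sum_apply]
    exact Finset.sum_congr rfl fun i _ => rfl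
  have hFbase : ∀ j : ↥B, F ↑j = if j ∈ Sidx then 1 else 0 := by
    intro j
    rw [hF]
    rw [Finset.sum_congr rfl fun i _ => hr_basis j i]
    exact Finset.sum_ite_eq Sidx j (fun _ => 1)
  have hGbase : ∀ j : ↥B, G ↑j = 1 := by
    intro j
    rw [hG]
    rw [Finset.sum_congr rfl fun i _ => hr_basis j i]
    rw [Finset.sum_ite_eq Finset.univ j (fun _ => 1)]
    simp
  have hFge1 : ∀ x ∈ posRoots Rad v, x ∉ Submodule.span ℝ Bs → 1 ≤ F x := by
    intro x hx hxs
    choose M hM using hnat x (posRoots_subset_closure hRS hx)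
    have hcast : F x = ((∑ i ∈ Sidx, M i : ℕ) : ℝ) := by
      rw [hF]
      push_cast
      exact Finset.sum_congr rfl fun i _ => hM i
    rw [hcast]
    have hne0 : (∑ i ∈ Sidx, M i) ≠ 0 := by
      intro h0
      apply hxs
      apply hspan_of_coords
      intro j hj
      have hjS : j ∈ Sidx := (hmemSidx j).mpr hj
      have hMj : M j = 0 := by
        have hle := Finset.single_le_sum (fun (i : ↥B) (_ : i ∈ Sidx) => Nat.zero_le (M i)) hjS
        omega
      rw [hM j, hMj, Nat.cast_zero]
    exact_mod_cast Nat.one_le_iff_ne_zero.mpr hne0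
  -- t α is not in the span of Bs
  have htα_notspan : t α ∉ Submodule.span ℝ Bs := by
    intro hc
    have h3 := hspanBs_t _ hc
    rw [ht.invol] at h3
    apply h2
    conv_rhs => rw [h3, neg_neg]

  -- expansion of α via t of basis expansion of t α
  choose N hN using hnat (t α) (posRoots_subset_closure hRS htαpos)
  have hexpand : α = ∑ i, (b.repr (t α)) i • t ((↑i : V)) := by
    have h0 := b.sum_repr (t α)
    calc α = t (t α) := (ht.invol α).symm
      _ = t (∑ i, (b.repr (t α)) i • b i) := by rw [h0]
      _ = ∑ i, (b.repr (t α)) i • t ((↑i : V)) := by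
          rw [map_sum]
          exact Finset.sum_congr rfl fun i _ => by rw [map_smul, hb]
  have hFα : F α = 1 := by
    have h0 : α = (↑iα : V) := rfl
    rw [h0, hFbase, if_pos ((hmemSidx iα).mpr hαnotBs)]
  have htb_pos : ∀ i : ↥B, i ∈ Sidx → t ↑i ∈ posRoots Rad v := by
    intro i hi
    have hiBs := (hmemSidx i).mp hi
    have hne : t ↑i ≠ -↑i := fun hc => hiBs ⟨i.2, hc⟩
    exact htpos _ (hBrad _ i.2) (hBposinner _ i.2) hne
  have htb_F : ∀ i : ↥B, i ∈ Sidx → 1 ≤ F (t ↑i) := by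
    intro i hi
    refine hFge1 _ (htb_pos i hi) ?_
    intro hc
    have h3 := hspanBs_t _ hc
    rw [ht.invol] at h3
    have hiBs := (hmemSidx i).mp hi
    apply hiBs
    refine ⟨i.2, ?_⟩
    conv_rhs => rw [h3, neg_neg]
  have hsum1 : ∑ i ∈ Sidx, (b.repr (t α)) i = 1 := by
    have e0 : F α = ∑ i, (b.repr (t α)) i * F (t ((↑i : V))) := by
      conv_lhs => rw [hexpand]
      rw [map_sum]
      exact Finset.sum_congr rfl fun i _ => by rw [map_smul, smul_eq_mul]
    have hFone : (1:ℝ) = ∑ i ∈ Sidx, (b.repr (t α)) i * F (t ↑i) := by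
      rw [← hFα, e0]
      refine (Finset.sum_subset (Finset.subset_univ Sidx) ?_).symm
      intro i _ hi
      have hiBs : (↑i : V) ∈ Bs := by
        by_contra hc
        exact hi ((hmemSidx i).mpr hc)
      have h7 : t ((↑i : V)) = -(↑i : V) := hiBs.2
      rw [h7, map_neg, hFbase, if_neg hi]
      ring
    have hle : ∑ i ∈ Sidx, (b.repr (t α)) i ≤ 1 := by
      rw [hFone]
      refine Finset.sum_le_sum fun i hi => ?_
      have h0 : 0 ≤ (b.repr (t α)) i := by rw [hN i]; exact Nat.cast_nonneg _
      exact le_mul_of_one_le_right h0 (htb_F i hi)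
    have hge : 1 ≤ ∑ i ∈ Sidx, (b.repr (t α)) i := by
      have h0 := hFge1 (t α) htαpos htα_notspan
      rwa [hF] at h0
    linarith
  have hsumN : ∑ i ∈ Sidx, N i = 1 := by
    have h0 : ((∑ i ∈ Sidx, N i : ℕ) : ℝ) = 1 := by
      push_cast
      rw [← hsum1]
      exact Finset.sum_congr rfl fun i _ => (hN i).symm
    exact_mod_cast h0
  obtain ⟨i₀, hi₀S, hi₀ne⟩ : ∃ i₀ ∈ Sidx, N i₀ ≠ 0 := by
    by_contra hcon
    push_neg at hcon
    rw [Finset.sum_eq_zero hcon] at hsumN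
    omega
  have hN0 : ∀ j ∈ Sidx, j ≠ i₀ → N j = 0 := by
    intro j hj hne
    have herase := Finset.add_sum_erase Sidx N hi₀S
    have hj' : j ∈ Sidx.erase i₀ := Finset.mem_erase.mpr ⟨hne, hj⟩
    have hle := Finset.single_le_sum
      (fun (k : ↥B) (_ : k ∈ Sidx.erase i₀) => Nat.zero_le (N k)) hj'
    omega
  have hNi₀ : N i₀ = 1 := by
    have hle := Finset.single_le_sum (fun (k : ↥B) (_ : k ∈ Sidx) => Nat.zero_le (N k)) hi₀S
    omega
  have hα'notBs : (↑i₀ : V) ∉ Bs := (hmemSidx i₀).mp hi₀S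
  have hcoord'' : ∀ i : ↥B, b.repr (t α - ↑i₀) i
      = (b.repr (t α)) i - (if i₀ = i then 1 else 0) := by
    intro i
    rw [map_sub, Finsupp.sub_apply, hr_basis]
  have hcoord''_S : ∀ i ∈ Sidx, b.repr (t α - ↑i₀) i = 0 := by
    intro i hi
    rw [hcoord'']
    by_cases hc : i₀ = i
    · rw [if_pos hc, ← hc, hN i₀, hNi₀]; norm_num
    · rw [if_neg hc, hN i, hN0 i hi (fun h => hc h.symm), Nat.cast_zero, sub_zero]
  have hcoord''_nat : ∀ i : ↥B, ∃ n : ℕ, b.repr (t α - ↑i₀) i = (n : ℝ) := by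
    intro i
    by_cases hi : i ∈ Sidx
    · exact ⟨0, by rw [hcoord''_S i hi, Nat.cast_zero]⟩
    · refine ⟨N i, ?_⟩
      have hne01 : i₀ ≠ i := fun hc => hi (by rw [← hc]; exact hi₀S)
      rw [hcoord'', if_neg hne01, sub_zero, hN i]
  have hα''mem : t α - ↑i₀ ∈ AddSubmonoid.closure Bs :=
    hmem_of_coords _ (fun i hi => hcoord''_S i ((hmemSidx i).mpr hi)) hcoord''_nat
  have hmono : ∀ x ∈ AddSubmonoid.closure Bs, x ∈ AddSubgroup.closure Bs :=
    fun x hx => AddSubmonoid.closure_le.mpr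
      (AddSubgroup.subset_closure : Bs ⊆ (AddSubgroup.closure Bs).toAddSubmonoid) hx
  refine ⟨(↑i₀ : V), i₀.2, hmono _ hα''mem, ?_, hα''mem, ?_, ?_⟩
  · -- uniqueness
    intro α₂ hα₂ hα₂mem
    have hdiff : (↑i₀ : V) - α₂ ∈ AddSubgroup.closure Bs := by
      have h5 : (↑i₀ : V) - α₂ = (t α - α₂) - (t α - ↑i₀) := by abel
      rw [h5]
      exact AddSubgroup.sub_mem _ hα₂mem (hmono _ hα''mem)
    have h6 := hgrp0 _ hdiff i₀ hα'notBs
    rw [map_sub, Finsupp.sub_apply] at h6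
    have h7 : b.repr ((↑i₀ : V)) i₀ = 1 := by rw [hr_basis, if_pos rfl]
    have h8 : b.repr α₂ i₀ = if (⟨α₂, hα₂⟩ : ↥B) = i₀ then 1 else 0 := hr_basis ⟨α₂, hα₂⟩ i₀
    by_cases hc : (⟨α₂, hα₂⟩ : ↥B) = i₀
    · exact congrArg Subtype.val hc
    · rw [h8, if_neg hc, h7] at h6
      norm_num at h6
  · -- α + (t α - ↑i₀) ∈ Rad
    have hα''span : t α - ↑i₀ ∈ Submodule.span ℝ Bs := hclosure_span _ hα''mem
    have htα'' : t (t α - ↑i₀) = -(t α - ↑i₀) := hspanBs_t _ hα''span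
    have h5 : t (t α - ↑i₀) = α - t ↑i₀ := by rw [map_sub, ht.invol]
    rw [h5] at htα''
    have h6 : t ((↑i₀ : V)) = α + (t α - ↑i₀) := by
      calc t ((↑i₀ : V)) = α - (α - t ↑i₀) := by abel
        _ = α - (-(t α - ↑i₀)) := by rw [htα'']
        _ = α + (t α - ↑i₀) := by abel
    rw [← h6]
    exact tmem _ (hBrad _ i₀.2)
  · -- maximality
    intro γ hγmem hγroot hγne c c'' hcsupp hc''supp hcsum hc''sum
    have hGsum : ∀ d : V →₀ ℕ, (d.support : Set V) ⊆ Bs →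
        G (d.sum fun β n => n • β) = ((d.sum fun _ n => n : ℕ) : ℝ) := by
      intro d hd
      rw [map_finsuppSum, Finsupp.sum, Finsupp.sum]
      push_cast
      refine Finset.sum_congr rfl fun β hβ => ?_
      have hβB : β ∈ B := hBsB (hd hβ)
      have hGβ : G β = 1 := hGbase ⟨β, hβB⟩
      rw [← Nat.cast_smul_eq_nsmul ℝ (d β) β, map_smul, smul_eq_mul, hGβ, mul_one]
    have hγ0 : ∀ i : ↥B, i ∈ Sidx → b.repr γ i = 0 :=
      fun i hi => (hBsnat γ hγmem).2 i ((hmemSidx i).mp hi)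
    have hγspan : γ ∈ Submodule.span ℝ Bs := hclosure_span _ hγmem
    have htγ : t γ = -γ := hspanBs_t _ hγspan
    have hδ : t (α + γ) = t α - γ := by rw [map_add, htγ]; abel
    have hδRad : t α - γ ∈ Rad := by rw [← hδ]; exact tmem _ hγroot
    have hδi₀ : b.repr (t α - γ) i₀ = 1 := by
      rw [map_sub, Finsupp.sub_apply, hγ0 i₀ hi₀S, sub_zero, hN i₀, hNi₀, Nat.cast_one]
    have hδpos : t α - γ ∈ posRoots Rad v := by
      rcases hRS.pos_or_neg hreg hδRad with h | h
      · exact h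
      · exfalso
        obtain ⟨n, hn⟩ := hnat _ (posRoots_subset_closure hRS h) i₀
        rw [map_neg, Finsupp.neg_apply, hδi₀] at hn
        have h0 : (0:ℝ) ≤ (n:ℝ) := Nat.cast_nonneg n
        rw [← hn] at h0
        norm_num at h0
    choose M hM using hnat _ (posRoots_subset_closure hRS hδpos)
    have hMi₀ : M i₀ = 1 := by
      have h0 := hM i₀
      rw [hδi₀] at h0
      exact_mod_cast h0.symm
    have hζcoord : ∀ i : ↥B, b.repr ((t α - ↑i₀) - γ) i
        = (M i : ℝ) - (if i₀ = i then 1 else 0) := by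
      intro i
      have h9 : (t α - ↑i₀) - γ = (t α - γ) - ↑i₀ := by abel
      rw [h9, map_sub, Finsupp.sub_apply, hM i, hr_basis]
    have hζnonneg : ∀ i : ↥B, 0 ≤ b.repr ((t α - ↑i₀) - γ) i := by
      intro i
      rw [hζcoord]
      by_cases hc : i₀ = i
      · rw [if_pos hc, ← hc, hMi₀]; norm_num
      · rw [if_neg hc, sub_zero]; exact Nat.cast_nonneg _
    have hζne : (t α - ↑i₀) - γ ≠ 0 := sub_ne_zero.mpr (Ne.symm hγne)
    obtain ⟨i₁, hi₁⟩ : ∃ i₁ : ↥B, b.repr ((t α - ↑i₀) - γ) i₁ ≠ 0 := by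
      by_contra hcon
      push_neg at hcon
      exact hζne (hzero_of_coords _ hcon)
    have hGζ : 0 < G ((t α - ↑i₀) - γ) := by
      rw [hG]
      have hlt : 0 < b.repr ((t α - ↑i₀) - γ) i₁ :=
        lt_of_le_of_ne (hζnonneg i₁) (Ne.symm hi₁)
      calc (0:ℝ) < b.repr ((t α - ↑i₀) - γ) i₁ := hlt
        _ ≤ ∑ i, b.repr ((t α - ↑i₀) - γ) i :=
          Finset.single_le_sum (fun i _ => hζnonneg i) (Finset.mem_univ i₁)
    have e1 : G γ = ((c.sum fun _ n => n : ℕ) : ℝ) := by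
      rw [← hcsum]; exact hGsum c hcsupp
    have e2 : G (t α - ↑i₀) = ((c''.sum fun _ n => n : ℕ) : ℝ) := by
      rw [← hc''sum]; exact hGsum c'' hc''supp
    have hfinal : ((c.sum fun _ n => n : ℕ) : ℝ) < ((c''.sum fun _ n => n : ℕ) : ℝ) := by
      rw [← e1, ← e2]
      rw [map_sub] at hGζ
      linarith
    exact_mod_cast hfinal


end PaperRS
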